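/- Fix N ∈ ℕ with N ≥ 2, δ = 1/N, and t ∈ [0, T]. Let L : ℝ → ℝ be convex, let G ∈ C²((0, ∞); ℝ) satisfy r G''(r) + 2 G'(r) ≥ 0 for all r > 0, and let V(·, t) : ℝ → ℝ be concave. Then the function F(x, u) = (1/N) Σ_{i=1}^{N} L(uᵢ) + (1/N) Σ_{i=2}^{N} G(δ/(xᵢ − x_{i−1})) − (1/N) Σ_{i=1}^{N} V(xᵢ, t) is convex on the set {x ∈ ℝ^N : x₁ < x₂ < ⋯ < x_N} × ℝ^N. -/

import Mathlib

open Set Finset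

private lemma aux_convex_H (G : ℝ → ℝ) (hG : ContDiffOn ℝ 2 G (Set.Ioi 0))
    (hGineq : ∀ r : ℝ, 0 < r → 0 ≤ r * deriv (deriv G) r + 2 * deriv G r)
    (δ : ℝ) (hδ : 0 < δ) :
    ConvexOn ℝ (Set.Ioi 0) (fun r : ℝ => G (δ / r)) := by
  have hGd : ∀ s : ℝ, 0 < s → HasDerivAt G (deriv G s) s := by
    intro s hs
    exact (((hG.differentiableOn (by norm_num)).differentiableAt
      (Ioi_mem_nhds hs))).hasDerivAt
  have hG1 : ContDiffOn ℝ 1 (deriv G) (Set.Ioi 0) :=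
    hG.deriv_of_isOpen isOpen_Ioi (by norm_num)
  have hGd2 : ∀ s : ℝ, 0 < s → HasDerivAt (deriv G) (deriv (deriv G) s) s := by
    intro s hs
    exact ((hG1.differentiableOn (by norm_num)).differentiableAt
      (Ioi_mem_nhds hs)).hasDerivAt
  have hinv : ∀ r : ℝ, 0 < r → HasDerivAt (fun x : ℝ => δ / x) (-δ / r ^ 2) r := by
    intro r hr
    have h := (hasDerivAt_inv hr.ne').const_mul δ
    have : δ * -(r ^ 2)⁻¹ = -δ / r ^ 2 := by ring
    rw [this] at h
    exact h
  have hsq : ∀ r : ℝ, 0 < r → HasDerivAt (fun x : ℝ => -δ / x ^ 2) (2 * δ / r ^ 3) r := by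
    intro r hr
    have h := (((hasDerivAt_pow 2 r).inv (pow_ne_zero 2 hr.ne'))).const_mul (-δ)
    have heq : (fun x : ℝ => -δ * (x ^ 2)⁻¹) = fun x : ℝ => -δ / x ^ 2 := by
      funext x; ring
    simp only [Pi.inv_apply] at h
    rw [heq] at h
    refine h.congr_deriv ?_
    field_simp [hr.ne']
    ring
  refine convexOn_of_hasDerivWithinAt2_nonneg (convex_Ioi 0)
    ?_ (f' := fun r => deriv G (δ / r) * (-δ / r ^ 2))
    (f'' := fun r => deriv (deriv G) (δ / r) * (-δ / r ^ 2) * (-δ / r ^ 2)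
      + deriv G (δ / r) * (2 * δ / r ^ 3)) ?_ ?_ ?_
  · -- continuity
    refine ContinuousOn.comp hG.continuousOn ?_ ?_
    · exact continuousOn_const.div continuousOn_id fun x hx => ne_of_gt hx
    · intro x hx
      exact mem_Ioi.2 (div_pos hδ hx)
  · intro r hr
    rw [interior_Ioi] at hr ⊢
    exact (((hGd _ (div_pos hδ hr)).comp r (hinv r hr))).hasDerivWithinAt
  · intro r hr
    rw [interior_Ioi] at hr ⊢
    exact ((((hGd2 _ (div_pos hδ hr)).comp r (hinv r hr))).mul
      (hsq r hr)).hasDerivWithinAt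
  · intro r hr
    rw [interior_Ioi] at hr
    have hr' : (0:ℝ) < r := hr
    have hspos : 0 < δ / r := div_pos hδ hr'
    have hkey := hGineq _ hspos
    show 0 ≤ deriv (deriv G) (δ / r) * (-δ / r ^ 2) * (-δ / r ^ 2)
        + deriv G (δ / r) * (2 * δ / r ^ 3)
    have heq : deriv (deriv G) (δ / r) * (-δ / r ^ 2) * (-δ / r ^ 2)
        + deriv G (δ / r) * (2 * δ / r ^ 3)
        = (δ / r ^ 3) * ((δ / r) * deriv (deriv G) (δ / r) + 2 * deriv G (δ / r)) := by
      field_simp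
    rw [heq]
    exact mul_nonneg (le_of_lt (div_pos hδ (pow_pos hr' 3))) hkey

/-- Convexity of the discrete Lagrangian
`F(x,u) = (1/N) Σᵢ L(uᵢ) + (1/N) Σ_{i≥2} G(δ/(xᵢ−x_{i−1})) − (1/N) Σᵢ V(xᵢ,t)`
on the set of strictly ordered configurations times all velocities. -/
theorem stmt_6
    (N : ℕ) (hN : 2 ≤ N)
    (L : ℝ → ℝ) (hL : ConvexOn ℝ Set.univ L)
    (G : ℝ → ℝ) (hG : ContDiffOn ℝ 2 G (Set.Ioi 0))
    (hGineq : ∀ r : ℝ, 0 < r → 0 ≤ r * deriv (deriv G) r + 2 * deriv G r)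
    (Vt : ℝ → ℝ) (hV : ConcaveOn ℝ Set.univ Vt) :
    ConvexOn ℝ
      (({z : ℕ → ℝ | ∀ i, 1 ≤ i → i < N → z i < z (i + 1)} : Set (ℕ → ℝ)) ×ˢ
        (Set.univ : Set (ℕ → ℝ)))
      (fun p : (ℕ → ℝ) × (ℕ → ℝ) =>
        (1 / (N:ℝ)) * ∑ i ∈ Finset.Icc 1 N, L (p.2 i)
        + (1 / (N:ℝ)) * ∑ i ∈ Finset.Icc 2 N, G (((1:ℝ)/N) / (p.1 i - p.1 (i - 1)))
        - (1 / (N:ℝ)) * ∑ i ∈ Finset.Icc 1 N, Vt (p.1 i)) := by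
  have hNpos : (0:ℝ) < N := by
    have : 0 < N := by omega
    exact_mod_cast this
  have hδ : (0:ℝ) < (1:ℝ)/N := by positivity
  have hH := aux_convex_H G hG hGineq ((1:ℝ)/N) hδ
  constructor
  · refine Convex.prod ?_ convex_univ
    intro z hz w hw a b ha hb hab
    intro i h1 h2
    simp only [Pi.add_apply, Pi.smul_apply, smul_eq_mul]
    have hz' := hz i h1 h2
    have hw' := hw i h1 h2
    rcases eq_or_lt_of_le ha with h | h
    · have hb1 : b = 1 := by linarith
      simp [← h, hb1]
      exact hw'
    · have h1' := mul_lt_mul_of_pos_left hz' h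
      have h2' := mul_le_mul_of_nonneg_left hw'.le hb
      linarith
  · intro p hp q hq a b ha hb hab
    simp only [Set.mem_prod, Set.mem_setOf_eq] at hp hq
    obtain ⟨hp1, -⟩ := hp
    obtain ⟨hq1, -⟩ := hq
    simp only [Prod.fst_add, Prod.snd_add, Prod.smul_fst, Prod.smul_snd,
      Pi.add_apply, Pi.smul_apply, smul_eq_mul]
    have hS1 : ∑ i ∈ Finset.Icc 1 N, L (a * p.2 i + b * q.2 i)
        ≤ a * ∑ i ∈ Finset.Icc 1 N, L (p.2 i) + b * ∑ i ∈ Finset.Icc 1 N, L (q.2 i) := by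
      rw [Finset.mul_sum, Finset.mul_sum, ← Finset.sum_add_distrib]
      refine Finset.sum_le_sum fun i _ => ?_
      have h := hL.2 (Set.mem_univ (p.2 i)) (Set.mem_univ (q.2 i)) ha hb hab
      simpa using h
    have hS3 : a * ∑ i ∈ Finset.Icc 1 N, Vt (p.1 i) + b * ∑ i ∈ Finset.Icc 1 N, Vt (q.1 i)
        ≤ ∑ i ∈ Finset.Icc 1 N, Vt (a * p.1 i + b * q.1 i) := by
      rw [Finset.mul_sum, Finset.mul_sum, ← Finset.sum_add_distrib]
      refine Finset.sum_le_sum fun i _ => ?_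
      have h := hV.2 (Set.mem_univ (p.1 i)) (Set.mem_univ (q.1 i)) ha hb hab
      simpa using h
    have hS2 : ∑ i ∈ Finset.Icc 2 N, G (((1:ℝ)/N) /
          ((a * p.1 i + b * q.1 i) - (a * p.1 (i-1) + b * q.1 (i-1))))
        ≤ a * ∑ i ∈ Finset.Icc 2 N, G (((1:ℝ)/N) / (p.1 i - p.1 (i-1)))
          + b * ∑ i ∈ Finset.Icc 2 N, G (((1:ℝ)/N) / (q.1 i - q.1 (i-1))) := by
      rw [Finset.mul_sum, Finset.mul_sum, ← Finset.sum_add_distrib]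
      refine Finset.sum_le_sum fun i hi => ?_
      rw [Finset.mem_Icc] at hi
      have hidx : i - 1 + 1 = i := by omega
      have hdp : 0 < p.1 i - p.1 (i-1) := by
        have h := hp1 (i-1) (by omega) (by omega)
        rw [hidx] at h
        linarith
      have hdq : 0 < q.1 i - q.1 (i-1) := by
        have h := hq1 (i-1) (by omega) (by omega)
        rw [hidx] at h
        linarith
      have key := hH.2 (Set.mem_Ioi.2 hdp) (Set.mem_Ioi.2 hdq) ha hb hab
      simp only [smul_eq_mul] at key
      have harg : (a * p.1 i + b * q.1 i) - (a * p.1 (i-1) + b * q.1 (i-1))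
          = a * (p.1 i - p.1 (i-1)) + b * (q.1 i - q.1 (i-1)) := by ring
      rw [harg]
      exact key
    have hc : (0:ℝ) ≤ 1/N := le_of_lt hδ
    have h1 := mul_le_mul_of_nonneg_left hS1 hc
    have h2 := mul_le_mul_of_nonneg_left hS2 hc
    have h3 := mul_le_mul_of_nonneg_left hS3 hc
    nlinarith [h1, h2, h3]
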